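/- Let m be a natural number with m ≥ 2, and let g : ℕ → ℝ be a function satisfying: (i) g(a) + g(b) + g(c) = 0 for all natural numbers a, b, c with a + b + c = m, and (ii) g(a) + g(m + 2 − a) = 0 for all natural numbers a with a ≤ m + 2. Then g(a) = 0 for every natural number a ≤ m + 2. -/

import Mathlib

theorem homogeneous_system_trivial (m : ℕ) (hm : 2 ≤ m) (g : ℕ → ℝ)
    (h1 : ∀ a b c : ℕ, a + b + c = m → g a + g b + g c = 0)
    (h2 : ∀ a : ℕ, a ≤ m + 2 → g a + g (m + 2 - a) = 0) :
    ∀ a : ℕ, a ≤ m + 2 → g a = 0 := by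
  have hrec : ∀ b, b ≤ m → g (b + 2) = g b + g 0 := by
    intro b hb
    have h1' := h1 b (m - b) 0 (by omega)
    have h2' := h2 (m - b) (by omega)
    have e : m + 2 - (m - b) = b + 2 := by omega
    rw [e] at h2'
    linarith
  have iter : ∀ k b, b + 2 * k ≤ m + 2 → g (b + 2 * k) = g b + (k : ℝ) * g 0 := by
    intro k
    induction k with
    | zero => intro b h; simp
    | succ n ih =>
      intro b h
      have e : b + 2 * (n + 1) = (b + 2 * n) + 2 := by ring
      rw [e, hrec (b + 2 * n) (by omega), ih b (by omega)]
      push_cast; ring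
  have hg1 : 2 * g 1 = 3 * g 0 := by
    have hm2 : m - 2 + 2 = m := by omega
    have r := hrec (m - 2) (by omega)
    rw [hm2] at r
    have a := h1 0 0 m (by omega)
    have b := h1 1 1 (m - 2) (by omega)
    linarith
  have hg0 : g 0 = 0 := by
    have it := iter (m / 2) 1 (by omega)
    rcases Nat.even_or_odd m with ⟨n, hn⟩ | ⟨n, hn⟩
    · have e : 1 + 2 * (m / 2) = m + 1 := by omega
      have e2 : m / 2 = n := by omega
      rw [e, e2] at it
      have h2' := h2 1 (by omega)
      have e3 : m + 2 - 1 = m + 1 := by omega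
      rw [e3] at h2'
      have hn1 : 1 ≤ n := by omega
      have hn1' : (1 : ℝ) ≤ (n : ℝ) := by exact_mod_cast hn1
      have key : g 0 * (3 + (n : ℝ)) = 0 := by nlinarith
      rcases mul_eq_zero.mp key with h | h
      · exact h
      · linarith
    · have e : 1 + 2 * (m / 2) = m := by omega
      have e2 : m / 2 = n := by omega
      rw [e, e2] at it
      have a := h1 0 0 m (by omega)
      have hn0 : (0 : ℝ) ≤ (n : ℝ) := Nat.cast_nonneg n
      have key : g 0 * (2 * (n : ℝ) + 7) = 0 := by nlinarith
      rcases mul_eq_zero.mp key with h | h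
      · exact h
      · linarith
  have hg1' : g 1 = 0 := by linarith
  intro a ha
  have it := iter (a / 2) (a % 2) (by omega)
  have e : a % 2 + 2 * (a / 2) = a := by omega
  rw [e, hg0] at it
  rcases Nat.mod_two_eq_zero_or_one a with h | h <;> rw [h] at it <;>
    simp [it, hg0, hg1']
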